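/- Given an n-player rule f = (α_1,...,α_n) of distinct reals, for every nonempty position P the score obtained by the first player under optimal play is uniquely determined (Zermelo's theorem for multiplayer chomp); equivalently, the ordinal ord_f P is well-defined by the recursion ord_f (1) = 1 and α_{ord_f P} = max over Q ∈ Mov P with ord_f Q ≠ n of α_{ord_f Q + 1}, where indices are taken with α_{n+1} := α_1. -/

import Mathlib

/-- A position: a nonincreasing list of positive naturals (trailing zeros removed). -/
def IsPos (P : List ℕ) : Prop := P.Pairwise (· ≥ ·) ∧ ∀ a ∈ P, 0 < a

/-- The result of chomping position `P`, keeping the first `x` entries and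
truncating all later entries to at most `a` (then removing zeros). -/
def chompAt (P : List ℕ) (x a : ℕ) : List ℕ :=
  (P.take x ++ (P.drop x).map (fun b => min b a)).filter (fun b => 0 < b)

/-- A chomp move from `P` to `Q`. -/
def ChompMove (P Q : List ℕ) : Prop :=
  ∃ x a : ℕ, x < P.length ∧ Q = chompAt P x a ∧ Q ≠ P

/-- `ord` is an ordinal assignment for the `n`-player rule `α` (with scores
`α 1, ..., α n`): `ord [] = 0`, ordinals of nonempty positions lie in `[1, n]`,
and `α (ord P)` is the maximum of `α (ord Q + 1)` over moves `P → Q` with `ord Q ≠ n`. -/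
structure IsOrd (n : ℕ) (α : ℕ → ℝ) (ord : List ℕ → ℕ) : Prop where
  ord_empty : ord [] = 0
  ord_mem : ∀ P, IsPos P → P ≠ [] → 1 ≤ ord P ∧ ord P ≤ n
  exists_best : ∀ P, IsPos P → P ≠ [] →
    ∃ Q, ChompMove P Q ∧ ord Q ≠ n ∧ ord P = ord Q + 1
  le_best : ∀ P, IsPos P → P ≠ [] → ∀ Q, ChompMove P Q → ord Q ≠ n →
    α (ord Q + 1) ≤ α (ord P)

lemma map_eq_self_of_sum {f : ℕ → ℕ} {l : List ℕ} (hle : ∀ b ∈ l, f b ≤ b)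
    (hs : (l.map f).sum = l.sum) : l.map f = l := by
  induction l with
  | nil => rfl
  | cons b l ih =>
      simp only [List.map_cons, List.sum_cons] at hs ⊢
      have h1 : f b ≤ b := hle b (List.mem_cons_self)
      have h2 : (l.map f).sum ≤ (l.map id).sum :=
        List.sum_le_sum (fun i hi => hle i (List.mem_cons_of_mem _ hi))
      rw [List.map_id] at h2
      have hb : f b = b := by omega
      have : (l.map f).sum = l.sum := by omega
      rw [hb, ih (fun b hb => hle b (List.mem_cons_of_mem _ hb)) this]

lemma mapmin_sum_le (l : List ℕ) (a : ℕ) : (l.map (fun b => min b a)).sum ≤ l.sum := by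
  have h : (l.map (fun b => min b a)).sum ≤ (l.map id).sum :=
    List.sum_le_sum (fun i _ => min_le_left i a)
  rwa [List.map_id] at h

lemma chompAt_inner_sum_le (P : List ℕ) (x a : ℕ) :
    (P.take x ++ (P.drop x).map (fun b => min b a)).sum ≤ P.sum := by
  rw [List.sum_append]
  calc (P.take x).sum + ((P.drop x).map (fun b => min b a)).sum
      ≤ (P.take x).sum + (P.drop x).sum :=
        Nat.add_le_add_left (mapmin_sum_le _ a) _
    _ = P.sum := by rw [← List.sum_append, List.take_append_drop]

lemma chompAt_sum_le (P : List ℕ) (x a : ℕ) : (chompAt P x a).sum ≤ P.sum :=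
  le_trans (List.Sublist.sum_le_sum (List.filter_sublist) (fun b _ => Nat.zero_le b))
    (chompAt_inner_sum_le P x a)

lemma chompAt_sum_lt {P : List ℕ} (hP : IsPos P) {x a : ℕ} (hne : chompAt P x a ≠ P) :
    (chompAt P x a).sum < P.sum := by
  rcases lt_or_eq_of_le (chompAt_sum_le P x a) with h | h
  · exact h
  exfalso; apply hne
  have h1 : (chompAt P x a).sum ≤ (P.take x ++ (P.drop x).map (fun b => min b a)).sum :=
    List.Sublist.sum_le_sum (List.filter_sublist) (fun b _ => Nat.zero_le b)
  have h2 := chompAt_inner_sum_le P x a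
  have hLsum : (P.take x ++ (P.drop x).map (fun b => min b a)).sum = P.sum := by omega
  have hmap : (P.drop x).map (fun b => min b a) = P.drop x := by
    apply map_eq_self_of_sum (fun b _ => min_le_left b a)
    have h3 := congrArg List.sum (List.take_append_drop x P)
    rw [List.sum_append] at hLsum
    rw [List.sum_append] at h3
    omega
  have hLP : P.take x ++ (P.drop x).map (fun b => min b a) = P := by
    rw [hmap, List.take_append_drop]
  unfold chompAt
  rw [hLP]
  apply List.filter_eq_self.2
  intro b hb
  simpa using hP.2 b hb

lemma chompAt_isPos {P : List ℕ} (hP : IsPos P) (x a : ℕ) : IsPos (chompAt P x a) := by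
  constructor
  · apply List.Pairwise.sublist (List.filter_sublist)
    have hsplit : List.Pairwise (· ≥ ·) (P.take x ++ P.drop x) := by
      rw [List.take_append_drop]; exact hP.1
    rw [List.pairwise_append] at hsplit ⊢
    refine ⟨hsplit.1, ?_, ?_⟩
    · exact List.Pairwise.map _ (fun u v huv => min_le_min huv le_rfl) hsplit.2.1
    · intro u hu v hv
      rcases List.mem_map.1 hv with ⟨b, hb, rfl⟩
      exact le_trans (min_le_left b a) (hsplit.2.2 u hu b hb)
  · intro b hb
    simpa using (List.mem_filter.1 hb).2

lemma chompAt_bound (P : List ℕ) (x a : ℕ) :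
    chompAt P x a = chompAt P x (min a P.sum) := by
  unfold chompAt
  have : (P.drop x).map (fun b => min b a) = (P.drop x).map (fun b => min b (min a P.sum)) := by
    apply List.map_congr_left
    intro b hb
    have hbP : b ∈ P := List.mem_of_mem_drop hb
    have : b ≤ P.sum := List.single_le_sum (fun c _ => Nat.zero_le c) b hbP
    omega
  rw [this]

lemma chompAt_zero (P : List ℕ) : chompAt P 0 0 = [] := by
  unfold chompAt
  simp [List.filter_eq_nil_iff]

lemma pos_sum_pos {P : List ℕ} (hP : IsPos P) (hne : P ≠ []) : 0 < P.sum := by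
  cases P with
  | nil => exact absurd rfl hne
  | cons b l =>
      have := hP.2 b (List.mem_cons_self)
      simp only [List.sum_cons]; omega

lemma nil_move {P : List ℕ} (hne : P ≠ []) : ChompMove P [] := by
  refine ⟨0, 0, ?_, (chompAt_zero P).symm, fun h => hne h.symm⟩
  cases P with
  | nil => exact absurd rfl hne
  | cons b l => simp

def cand (P : List ℕ) : Finset (List ℕ) :=
  (((Finset.range P.length) ×ˢ (Finset.range (P.sum + 1))).image
    (fun p => chompAt P p.1 p.2)).filter (fun Q => Q.sum < P.sum)

lemma cand_sum_lt {P Q : List ℕ} (h : Q ∈ cand P) : Q.sum < P.sum := by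
  simpa [cand] using (Finset.mem_filter.1 h).2

lemma cand_move {P Q : List ℕ} (h : Q ∈ cand P) : ChompMove P Q := by
  rcases Finset.mem_filter.1 h with ⟨h1, h2⟩
  rcases Finset.mem_image.1 h1 with ⟨⟨x, a⟩, hxa, rfl⟩
  rcases Finset.mem_product.1 hxa with ⟨hx, _⟩
  refine ⟨x, a, Finset.mem_range.1 hx, rfl, ?_⟩
  intro hQP
  rw [hQP] at h2
  exact lt_irrefl _ h2

lemma move_mem_cand {P Q : List ℕ} (hP : IsPos P) (h : ChompMove P Q) : Q ∈ cand P := by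
  rcases h with ⟨x, a, hx, rfl, hne⟩
  rw [cand, Finset.mem_filter]
  constructor
  · apply Finset.mem_image.2
    refine ⟨(x, min a P.sum), ?_, (chompAt_bound P x a).symm⟩
    rw [Finset.mem_product]
    exact ⟨Finset.mem_range.2 hx, Finset.mem_range.2 (by omega)⟩
  · exact chompAt_sum_lt hP hne

lemma nil_mem_cand {P : List ℕ} (hP : IsPos P) (hne : P ≠ []) : [] ∈ cand P :=
  move_mem_cand hP (nil_move hne)

noncomputable def ordf (n : ℕ) (α : ℕ → ℝ) (P : List ℕ) : ℕ :=
  if P = [] then 0 else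
    (Finset.exists_max_image
      (insert 1 ((cand P).attach.image
        (fun Q => if ordf n α Q.1 = n then 1 else ordf n α Q.1 + 1)))
      α ⟨1, Finset.mem_insert_self 1 _⟩).choose
termination_by P.sum
decreasing_by all_goals exact cand_sum_lt Q.2

lemma move_isPos {P Q : List ℕ} (hP : IsPos P) (h : ChompMove P Q) : IsPos Q := by
  rcases h with ⟨x, a, _, rfl, _⟩
  exact chompAt_isPos hP x a

lemma move_sum_lt {P Q : List ℕ} (hP : IsPos P) (h : ChompMove P Q) : Q.sum < P.sum := by
  rcases h with ⟨x, a, _, rfl, hne⟩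
  exact chompAt_sum_lt hP hne

noncomputable def Tset (n : ℕ) (α : ℕ → ℝ) (P : List ℕ) : Finset ℕ :=
  insert 1 ((cand P).attach.image
    (fun Q => if ordf n α Q.1 = n then 1 else ordf n α Q.1 + 1))


lemma ordf_nil (n : ℕ) (α : ℕ → ℝ) : ordf n α [] = 0 := by
  rw [ordf]
  simp

lemma ordf_spec (n : ℕ) (α : ℕ → ℝ) {P : List ℕ} (h : P ≠ []) :
    ordf n α P ∈ Tset n α P ∧ ∀ m ∈ Tset n α P, α m ≤ α (ordf n α P) := by
  have hch := (Finset.exists_max_image (Tset n α P) α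
    ⟨1, Finset.mem_insert_self 1 _⟩).choose_spec
  have heq : ordf n α P = (Finset.exists_max_image (Tset n α P) α
      ⟨1, Finset.mem_insert_self 1 _⟩).choose := by
    rw [ordf, if_neg h]
    rfl
  rw [heq]
  exact ⟨hch.1, hch.2⟩

lemma mem_Tset {n : ℕ} {α : ℕ → ℝ} {P : List ℕ} {m : ℕ} (hn : 2 ≤ n)
    (hP : IsPos P) (h : P ≠ []) :
    m ∈ Tset n α P ↔ ∃ Q, ChompMove P Q ∧ ordf n α Q ≠ n ∧ m = ordf n α Q + 1 := by
  constructor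
  · intro hm
    rcases Finset.mem_insert.1 hm with rfl | hm
    · exact ⟨[], nil_move h, by rw [ordf_nil]; omega, by rw [ordf_nil]⟩
    · rcases Finset.mem_image.1 hm with ⟨⟨Q, hQ⟩, _, rfl⟩
      by_cases hc : ordf n α Q = n
      · rw [if_pos hc]
        exact ⟨[], nil_move h, by rw [ordf_nil]; omega, by rw [ordf_nil]⟩
      · rw [if_neg hc]
        exact ⟨Q, cand_move hQ, hc, rfl⟩
  · rintro ⟨Q, hQ, hQn, rfl⟩
    have hQc : Q ∈ cand P := move_mem_cand hP hQ
    apply Finset.mem_insert_of_mem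
    apply Finset.mem_image.2
    exact ⟨⟨Q, hQc⟩, Finset.mem_attach _ _, by rw [if_neg hQn]⟩

lemma ordf_bounds {n : ℕ} {α : ℕ → ℝ} (hn : 2 ≤ n) :
    ∀ N P, P.sum ≤ N → IsPos P → P ≠ [] → 1 ≤ ordf n α P ∧ ordf n α P ≤ n := by
  intro N
  induction N with
  | zero =>
      intro P hs hP hne
      exact absurd hs (by have := pos_sum_pos hP hne; omega)
  | succ N ih =>
      intro P hs hP hne
      obtain ⟨Q, hQ, hQn, hPQ⟩ := (mem_Tset hn hP hne).1 (ordf_spec n α hne).1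
      by_cases hQnil : Q = []
      · subst hQnil
        rw [ordf_nil] at hPQ
        omega
      · have hQs : Q.sum < P.sum := move_sum_lt hP hQ
        have := ih Q (by omega) (move_isPos hP hQ) hQnil
        omega

lemma ordf_isOrd {n : ℕ} (hn : 2 ≤ n) (α : ℕ → ℝ) : IsOrd n α (ordf n α) := by
  constructor
  · exact ordf_nil n α
  · intro P hP hne
    exact ordf_bounds hn P.sum P le_rfl hP hne
  · intro P hP hne
    exact (mem_Tset hn hP hne).1 (ordf_spec n α hne).1
  · intro P hP hne Q hQ hQn
    exact (ordf_spec n α hne).2 _ ((mem_Tset hn hP hne).2 ⟨Q, hQ, hQn, rfl⟩)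


/-- Zermelo's theorem for multiplayer chomp: for an `n`-player
rule of distinct scores, an ordinal assignment exists and is unique on positions. -/
theorem zermelo_multiplayer (n : ℕ) (hn : 2 ≤ n) (α : ℕ → ℝ)
    (hα : Set.InjOn α (Set.Icc 1 n)) :
    ∃ ord : List ℕ → ℕ, IsOrd n α ord ∧
      ∀ ord' : List ℕ → ℕ, IsOrd n α ord' → ∀ P, IsPos P → ord' P = ord P := by
  refine ⟨ordf n α, ordf_isOrd hn α, ?_⟩
  intro ord' hord'
  have hord : IsOrd n α (ordf n α) := ordf_isOrd hn α
  suffices h : ∀ N P, P.sum ≤ N → IsPos P → ord' P = ordf n α P by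
    intro P hP; exact h P.sum P le_rfl hP
  intro N
  induction N with
  | zero =>
      intro P hs hP
      by_cases hne : P = []
      · subst hne; rw [hord'.ord_empty, ordf_nil]
      · exact absurd hs (by have := pos_sum_pos hP hne; omega)
  | succ N ih =>
      intro P hs hP
      by_cases hne : P = []
      · subst hne; rw [hord'.ord_empty, ordf_nil]
      · have hIH : ∀ Q, ChompMove P Q → ord' Q = ordf n α Q := by
          intro Q hQ
          have := move_sum_lt hP hQ
          exact ih Q (by omega) (move_isPos hP hQ)
        have h1 : α (ord' P) ≤ α (ordf n α P) := by
          obtain ⟨Q, hQ, hQn, hPQ⟩ := hord'.exists_best P hP hne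
          rw [hPQ, hIH Q hQ]
          exact hord.le_best P hP hne Q hQ (by rw [← hIH Q hQ]; exact hQn)
        have h2 : α (ordf n α P) ≤ α (ord' P) := by
          obtain ⟨Q, hQ, hQn, hPQ⟩ := hord.exists_best P hP hne
          rw [hPQ, ← hIH Q hQ]
          exact hord'.le_best P hP hne Q hQ (by rw [hIH Q hQ]; exact hQn)
        have hm1 := hord'.ord_mem P hP hne
        have hm2 := hord.ord_mem P hP hne
        exact hα (Set.mem_Icc.2 hm1) (Set.mem_Icc.2 hm2) (le_antisymm h1 h2)
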